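/- Let Γ' = Γ ⊕ Q·δ be a divisible ordered abelian group ordered so that 0 < q·δ < γ for all positive rationals q and all positive γ ∈ Γ (δ infinitesimal with respect to Γ). Let Z ⊆ Γ^n, let h : Z → Γ be a function, and suppose that, for the induced subsets and functions over Γ', there is a term t in +, −, min, max and an element β ∈ Q·δ such that h'(x) = t(x_1,…,x_n, β) for all x ∈ Z'(Γ'). Then h(x) = t(x_1,…,x_n, 0) for all x ∈ Z, i.e., one can reduce the parameter β modulo the convex subgroup Q·δ. -/

import Mathlib

/-- Terms in the operations `+`, `−`, `min`, `max`, variables and constants. -/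
inductive MMTerm (Γ : Type*) (n : ℕ) : Type _ where
  | const : Γ → MMTerm Γ n
  | var : Fin n → MMTerm Γ n
  | add : MMTerm Γ n → MMTerm Γ n → MMTerm Γ n
  | neg : MMTerm Γ n → MMTerm Γ n
  | min : MMTerm Γ n → MMTerm Γ n → MMTerm Γ n
  | max : MMTerm Γ n → MMTerm Γ n → MMTerm Γ n

def MMTerm.eval {Γ : Type*} [LinearOrder Γ] [AddCommGroup Γ] {n : ℕ} :
    MMTerm Γ n → (Fin n → Γ) → Γ
  | .const c, _ => c
  | .var i, x => x i
  | .add t s, x => t.eval x + s.eval x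
  | .neg t, x => -t.eval x
  | .min t s, x => Min.min (t.eval x) (s.eval x)
  | .max t s, x => Max.max (t.eval x) (s.eval x)

/-- Transport of the constants of a term along a map `f : Γ → Δ`. -/
def MMTerm.map {Γ Δ : Type*} {n : ℕ} (f : Γ → Δ) : MMTerm Γ n → MMTerm Δ n
  | .const c => .const (f c)
  | .var i => .var i
  | .add t s => .add (t.map f) (s.map f)
  | .neg t => .neg (t.map f)
  | .min t s => .min (t.map f) (s.map f)
  | .max t s => .max (t.map f) (s.map f)

/-- The cell in `Δ^n` cut out by a finite system of ℚ-affine inequalities with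
constants from `Γ` transported along `f : Γ → Δ`. -/
def cellSet {Γ Δ : Type*} [AddCommGroup Δ] [LinearOrder Δ] [IsOrderedAddMonoid Δ] [Module ℚ Δ] {n : ℕ}
    (f : Γ → Δ) (s : Finset ((Fin n → ℚ) × Γ × Bool)) : Set (Fin n → Δ) :=
  {x | ∀ p ∈ s, if p.2.2 = true then (∑ j, p.1 j • x j) < f p.2.1
       else (∑ j, p.1 j • x j) ≤ f p.2.1}


lemma MMTerm.pi_map_eval {Γ Γ' : Type*} [AddCommGroup Γ] [LinearOrder Γ] [IsOrderedAddMonoid Γ]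
    [AddCommGroup Γ'] [LinearOrder Γ'] [IsOrderedAddMonoid Γ'] (ι : Γ → Γ') (π : Γ' → Γ)
    (πι : ∀ a, π (ι a) = a) (πadd : ∀ z w, π (z + w) = π z + π w)
    (πneg : ∀ z, π (-z) = -π z) (πmono : Monotone π) :
    ∀ {m : ℕ} (u : MMTerm Γ m) (y : Fin m → Γ'),
      π ((u.map ι).eval y) = u.eval (fun i => π (y i)) := by
  intro m u
  induction u with
  | const c => intro y; simp [MMTerm.map, MMTerm.eval, πι]
  | var i => intro y; simp [MMTerm.map, MMTerm.eval]
  | add a b iha ihb => intro y; simp [MMTerm.map, MMTerm.eval, πadd, iha, ihb]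
  | neg a iha => intro y; simp [MMTerm.map, MMTerm.eval, πneg, iha]
  | min a b iha ihb =>
      intro y; simp [MMTerm.map, MMTerm.eval, πmono.map_min, iha, ihb]
  | max a b iha ihb =>
      intro y; simp [MMTerm.map, MMTerm.eval, πmono.map_max, iha, ihb]

/-- Let `Γ' = Γ ⊕ ℚ·δ` (ordered so that `δ` is a positive infinitesimal
with respect to `Γ`), `Z ⊆ Γ^n` a definable (semilinear, over `Γ`) set, and
`h : Z → Γ` a definable function (given by a term `th` with constants in `Γ`).  If
there are a term `t` in `+`, `−`, `min`, `max` (with constants in `Γ`) and an element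
`β = q·δ ∈ ℚ·δ` such that `h'(x) = t(x_1,…,x_n,β)` for all `x` in the induced set
`Z'(Γ')`, then `h(x) = t(x_1,…,x_n,0)` on `Z` — i.e. one may reduce the parameter `β`
modulo the convex subgroup `ℚ·δ`. -/
theorem stmt_16 {Γ Γ' : Type*} [AddCommGroup Γ] [LinearOrder Γ] [IsOrderedAddMonoid Γ] [Module ℚ Γ]
    [AddCommGroup Γ'] [LinearOrder Γ'] [IsOrderedAddMonoid Γ'] [Module ℚ Γ']
    (ι : Γ →+ Γ') (hι : StrictMono ι)
    (δ : Γ') (hδ : 0 < δ)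
    (hinf : ∀ (q : ℚ) (γ : Γ), 0 < γ → q • δ < ι γ)
    (hdecomp : ∀ z : Γ', ∃! p : Γ × ℚ, z = ι p.1 + p.2 • δ)
    {n : ℕ} (kc : ℕ) (cells : Fin kc → Finset ((Fin n → ℚ) × Γ × Bool))
    (th : MMTerm Γ n) (t : MMTerm Γ (n + 1)) (q : ℚ)
    (hyp : ∀ x : Fin n → Γ', x ∈ ⋃ i, cellSet (fun a => ι a) (cells i) →
      (th.map ι).eval x = (t.map ι).eval (Fin.snoc x (q • δ))) :
    ∀ x : Fin n → Γ, x ∈ ⋃ i, cellSet (id : Γ → Γ) (cells i) →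
      th.eval x = t.eval (Fin.snoc x 0) := by
  classical
  intro x hx
  choose P hP hPu using hdecomp
  set π : Γ' → Γ := fun z => (P z).1 with hπdef
  have uniq : ∀ (z : Γ') (a : Γ) (r : ℚ), z = ι a + r • δ → P z = (a, r) :=
    fun z a r h => (hPu z (a, r) h).symm
  have πι : ∀ a : Γ, π (ι a) = a := by
    intro a
    have h := uniq (ι a) a 0 (by simp)
    simp [hπdef, h]
  have πδ : ∀ r : ℚ, π (r • δ) = 0 := by
    intro r
    have h := uniq (r • δ) 0 r (by simp)
    simp [hπdef, h]
  have πadd : ∀ z w : Γ', π (z + w) = π z + π w := by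
    intro z w
    have h : z + w = ι ((P z).1 + (P w).1) + ((P z).2 + (P w).2) • δ := by
      have hz : z = ι (P z).1 + (P z).2 • δ := hP z
      have hw : w = ι (P w).1 + (P w).2 • δ := hP w
      rw [map_add, add_smul]
      nth_rewrite 1 [hz, hw]
      rw [add_add_add_comm]
    have h2 := uniq (z + w) _ _ h
    simp [hπdef, h2]
  have πneg : ∀ z : Γ', π (-z) = -π z := by
    intro z
    have h : -z = ι (-(P z).1) + (-(P z).2) • δ := by
      have hz : z = ι (P z).1 + (P z).2 • δ := hP z
      rw [map_neg, neg_smul]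
      nth_rewrite 1 [hz]
      rw [neg_add]
    have h2 := uniq (-z) _ _ h
    simp [hπdef, h2]
  have πmono : Monotone π := by
    intro z w hzw
    by_contra hlt
    push_neg at hlt
    have hpos : (0 : Γ) < (P z).1 - (P w).1 := by
      simp only [hπdef] at hlt; exact sub_pos.mpr hlt
    have hkey := hinf ((P w).2 - (P z).2) _ hpos
    rw [map_sub, sub_smul] at hkey
    have hwz : w < z := by
      have hz : z = ι (P z).1 + (P z).2 • δ := hP z
      have hw : w = ι (P w).1 + (P w).2 • δ := hP w
      have h1 : ((P w).2 • δ : Γ') - (P z).2 • δ < ι ((P z).1) - ι ((P w).1) := hkey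
      have h2 := sub_lt_sub_iff.mp h1
      rw [hw, hz, add_comm (ι (P w).1) ((P w).2 • δ)]
      exact h2
    exact absurd hzw (not_le.mpr hwz)
  obtain ⟨S, ⟨i, rfl⟩, hxi⟩ := hx
  have hx' : (fun j => ι (x j)) ∈ ⋃ i, cellSet (fun a => ι a) (cells i) := by
    refine Set.mem_iUnion.mpr ⟨i, ?_⟩
    intro p hp
    have hcond := hxi p hp
    have hsum : (∑ j, p.1 j • ι (x j)) = ι (∑ j, p.1 j • x j) := by
      rw [map_sum]
      exact Finset.sum_congr rfl fun j _ => (map_rat_smul ι _ _).symm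
    simp only [cellSet, Set.mem_setOf_eq, id] at hcond ⊢
    by_cases hb : p.2.2 = true
    · simp only [hb, if_true] at hcond ⊢
      rw [hsum]; exact hι hcond
    · simp only [hb, if_false] at hcond ⊢
      rw [hsum]; exact hι.monotone hcond
  have heq := hyp _ hx'
  have e1 : π ((th.map (fun a => ι a)).eval (fun j => ι (x j))) = th.eval x := by
    rw [MMTerm.pi_map_eval (fun a => ι a) π πι πadd πneg πmono]
    congr 1; funext j; exact πι (x j)
  have e2 : π ((t.map (fun a => ι a)).eval (Fin.snoc (fun j => ι (x j)) (q • δ)))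
      = t.eval (Fin.snoc x 0) := by
    rw [MMTerm.pi_map_eval (fun a => ι a) π πι πadd πneg πmono]
    congr 1
    funext j
    refine Fin.lastCases ?_ ?_ j
    · simp [Fin.snoc_last, πδ]
    · intro k; simp [Fin.snoc_castSucc, πι]
  rw [← e1, ← e2, heq]
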